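/- Let k be a complete nonarchimedean valued field. The Banach k-vector space C_bd(ℚ, k) of bounded continuous functions ℚ → k is isometrically isomorphic to k × C₀(ℕ, C_bd(ℚ, k)) with the maximum norm on the product. -/

import Mathlib

open scoped BoundedContinuousFunction ZeroAtInfty

noncomputable section CbdRatSplitAux

open Set Filter BoundedContinuousFunction

namespace CbdRatSplit

/-- Endpoint sequence `√2 / 2^m`, strictly decreasing to `0`, all irrational. -/
def en (m : ℕ) : ℝ := Real.sqrt 2 / 2 ^ m

lemma en_pos (m : ℕ) : 0 < en m := div_pos (by positivity) (by positivity)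

lemma en_irrational (m : ℕ) : Irrational (en m) := by
  have h := irrational_sqrt_two.div_natCast (m := 2 ^ m) (by positivity)
  simpa [en] using h

lemma en_anti {a b : ℕ} (h : a ≤ b) : en b ≤ en a := by
  apply div_le_div_of_nonneg_left (by positivity) (by positivity)
  exact pow_le_pow_right₀ one_le_two h

lemma en_succ_lt (m : ℕ) : en (m + 1) < en m := by
  apply div_lt_div_of_pos_left (by positivity) (by positivity)
  exact pow_lt_pow_right₀ one_lt_two (Nat.lt_succ_self m)

lemma en_zero : en 0 = Real.sqrt 2 := by simp [en]

lemma en_tendsto : Tendsto en atTop (nhds 0) := by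
  have : en = fun m : ℕ => Real.sqrt 2 * (1 / 2 : ℝ) ^ m := by
    funext m; simp [en, div_pow, one_div, div_eq_mul_inv, inv_pow]
  rw [this]
  have h2 : Tendsto (fun m : ℕ => (1 / 2 : ℝ) ^ m) atTop (nhds 0) :=
    tendsto_pow_atTop_nhds_zero_of_lt_one (by norm_num) (by norm_num)
  simpa using h2.const_mul (Real.sqrt 2)

/-- The intervals of the decomposition of `ℝ \ {0}` (up to the irrational endpoints). -/
def II : ℕ → Set ℝ
  | 0 => Iio (-Real.sqrt 2)
  | 1 => Ioi (Real.sqrt 2)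
  | n + 2 =>
    if Even n then Ioo (-en (n / 2)) (-en (n / 2 + 1)) else Ioo (en (n / 2 + 1)) (en (n / 2))

lemma II_zero : II 0 = Iio (-Real.sqrt 2) := rfl

lemma II_one : II 1 = Ioi (Real.sqrt 2) := rfl

lemma II_even (m : ℕ) : II (2 * m + 2) = Ioo (-en m) (-en (m + 1)) := by
  show (if Even (2 * m) then _ else _) = _
  rw [if_pos (even_two_mul m)]
  norm_num

lemma II_odd (m : ℕ) : II (2 * m + 3) = Ioo (en (m + 1)) (en m) := by
  show (if Even (2 * m + 1) then _ else _) = _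
  rw [if_neg (by rw [Nat.even_iff]; omega)]
  have h : (2 * m + 1) / 2 = m := by omega
  rw [h]

lemma II_cases (n : ℕ) : n = 0 ∨ n = 1 ∨ (∃ m, n = 2 * m + 2) ∨ ∃ m, n = 2 * m + 3 := by
  rcases Nat.even_or_odd n with ⟨m, hm⟩ | ⟨m, hm⟩
  · rcases Nat.eq_zero_or_pos m with rfl | hpos
    · left; omega
    · right; right; left; exact ⟨m - 1, by omega⟩
  · rcases Nat.eq_zero_or_pos m with rfl | hpos
    · right; left; omega
    · right; right; right; exact ⟨m - 1, by omega⟩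

lemma II_shape (n : ℕ) :
    (∃ a, Irrational a ∧ II n = Iio a) ∨ (∃ a, Irrational a ∧ II n = Ioi a) ∨
      ∃ a b, Irrational a ∧ Irrational b ∧ a < b ∧ II n = Ioo a b := by
  rcases II_cases n with rfl | rfl | ⟨m, rfl⟩ | ⟨m, rfl⟩
  · exact Or.inl ⟨_, irrational_sqrt_two.neg, II_zero⟩
  · exact Or.inr (Or.inl ⟨_, irrational_sqrt_two, II_one⟩)
  · exact Or.inr (Or.inr ⟨_, _, (en_irrational m).neg, (en_irrational (m + 1)).neg,
      neg_lt_neg (en_succ_lt m), II_even m⟩)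
  · exact Or.inr (Or.inr ⟨_, _, en_irrational (m + 1), en_irrational m, en_succ_lt m, II_odd m⟩)

lemma mem_II_neg_iff {n : ℕ} {x : ℝ} (hx : x ∈ II n) : x < 0 ↔ Even n := by
  rcases II_cases n with rfl | rfl | ⟨m, rfl⟩ | ⟨m, rfl⟩
  · rw [II_zero, mem_Iio] at hx
    have h2 : (0:ℝ) < Real.sqrt 2 := by positivity
    simp only [show Even 0 from ⟨0, rfl⟩, iff_true]; linarith
  · rw [II_one, mem_Ioi] at hx
    have h2 : (0:ℝ) < Real.sqrt 2 := by positivity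
    constructor
    · intro h; linarith
    · intro h; exact absurd h (by decide)
  · rw [II_even, mem_Ioo] at hx
    have := en_pos (m + 1)
    constructor
    · intro _; exact ⟨m + 1, by ring⟩
    · intro _; linarith
  · rw [II_odd, mem_Ioo] at hx
    have := en_pos (m + 1)
    constructor
    · intro h; linarith
    · rintro ⟨r, hr⟩; omega
  
lemma mem_II_abs_le_one {n : ℕ} (hn : n ≤ 1) {x : ℝ} (hx : x ∈ II n) : en 0 < |x| := by
  interval_cases n
  · rw [II_zero, mem_Iio] at hx
    have h2 : (0:ℝ) < Real.sqrt 2 := by positivity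
    rw [en_zero, abs_of_neg (by linarith)]; linarith
  · rw [II_one, mem_Ioi] at hx
    have h2 : (0:ℝ) < Real.sqrt 2 := by positivity
    rw [en_zero, abs_of_pos (by linarith)]; linarith

lemma mem_II_abs {m n : ℕ} (h : n = 2 * m + 2 ∨ n = 2 * m + 3) {x : ℝ} (hx : x ∈ II n) :
    en (m + 1) < |x| ∧ |x| < en m := by
  have hp := en_pos (m + 1)
  rcases h with rfl | rfl
  · rw [II_even, mem_Ioo] at hx
    rw [abs_of_neg (by linarith)]
    constructor <;> linarith
  · rw [II_odd, mem_Ioo] at hx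
    rw [abs_of_pos (by linarith)]
    exact hx

lemma zero_not_mem_II (n : ℕ) : (0 : ℝ) ∉ II n := by
  intro h
  rcases II_cases n with rfl | rfl | ⟨m, rfl⟩ | ⟨m, rfl⟩
  · have := mem_II_abs_le_one (by norm_num) h
    simp at this; exact absurd this (not_lt.2 (en_pos 0).le)
  · have := mem_II_abs_le_one (by norm_num) h
    simp at this; exact absurd this (not_lt.2 (en_pos 0).le)
  · have := (mem_II_abs (Or.inl rfl) h).1
    simp at this; exact absurd this (not_lt.2 (en_pos (m+1)).le)
  · have := (mem_II_abs (Or.inr rfl) h).1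
    simp at this; exact absurd this (not_lt.2 (en_pos (m+1)).le)

lemma II_disjoint {a b : ℕ} (hab : a ≠ b) {x : ℝ} (ha : x ∈ II a) (hb : x ∈ II b) : False := by
  -- same parity
  have hpar : a % 2 = b % 2 := by
    have h1 := (mem_II_neg_iff ha).symm.trans (mem_II_neg_iff hb)
    rw [Nat.even_iff, Nat.even_iff] at h1
    by_cases h : a % 2 = 0
    · have hb2 := h1.mp h; omega
    · have hb2 : ¬b % 2 = 0 := fun hh => h (h1.mpr hh)
      omega
  have habs : ∀ {m m' : ℕ}, m ≠ m' → en (m + 1) < |x| → |x| < en m →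
      en (m' + 1) < |x| → |x| < en m' → False := by
    intro m m' hmm h1 h2 h3 h4
    rcases hmm.lt_or_gt with hlt | hlt
    · have : en m' ≤ en (m + 1) := en_anti (by omega)
      linarith
    · have : en m ≤ en (m' + 1) := en_anti (by omega)
      linarith
  have hsmall : ∀ {n n' m' : ℕ}, n ≤ 1 → (n' = 2 * m' + 2 ∨ n' = 2 * m' + 3) →
      x ∈ II n → x ∈ II n' → False := by
    intro n n' m' hn hn' h1 h2
    have ha1 := mem_II_abs_le_one hn h1
    have ha2 := mem_II_abs hn' h2
    have : en m' ≤ en 0 := en_anti (by omega)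
    linarith [ha2.2]
  rcases II_cases a with rfl | rfl | ⟨m, rfl⟩ | ⟨m, rfl⟩ <;>
      rcases II_cases b with rfl | rfl | ⟨m', rfl⟩ | ⟨m', rfl⟩
  · omega
  · omega
  · exact hsmall (by norm_num) (Or.inl rfl) ha hb
  · omega
  · omega
  · omega
  · omega
  · exact hsmall (by norm_num) (Or.inr rfl) ha hb
  · exact hsmall (by norm_num) (Or.inl rfl) hb ha
  · omega
  · have h2 := mem_II_abs (Or.inl rfl) ha
    have h3 := mem_II_abs (Or.inl rfl) hb
    exact habs (by omega) h2.1 h2.2 h3.1 h3.2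
  · omega
  · omega
  · exact hsmall (by norm_num) (Or.inr rfl) hb ha
  · omega
  · have h2 := mem_II_abs (Or.inr rfl) ha
    have h3 := mem_II_abs (Or.inr rfl) hb
    exact habs (by omega) h2.1 h2.2 h3.1 h3.2

lemma II_ordConnected (n : ℕ) : (II n).OrdConnected := by
  rcases II_shape n with ⟨a, _, h⟩ | ⟨a, _, h⟩ | ⟨a, b, _, _, _, h⟩ <;> rw [h]
  · exact ordConnected_Iio
  · exact ordConnected_Ioi
  · exact ordConnected_Ioo

lemma II_isOpen (n : ℕ) : IsOpen (II n) := by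
  rcases II_shape n with ⟨a, _, h⟩ | ⟨a, _, h⟩ | ⟨a, b, _, _, _, h⟩ <;> rw [h]
  · exact isOpen_Iio
  · exact isOpen_Ioi
  · exact isOpen_Ioo

/-- covering of nonzero rationals -/
lemma exists_mem_II {q : ℚ} (hq : q ≠ 0) : ∃ n, (q : ℝ) ∈ II n := by
  have hirr : ∀ m, |(q : ℝ)| ≠ en m := by
    intro m h
    exact (en_irrational m) ⟨|q|, by rw [Rat.cast_abs, h]⟩
  have habs : 0 < |(q : ℝ)| := by
    simp only [abs_pos, ne_eq, Rat.cast_eq_zero]; exact_mod_cast hq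
  -- find the magnitude band for |q|
  have hband : en 0 < |(q : ℝ)| ∨ ∃ m, en (m + 1) < |(q : ℝ)| ∧ |(q : ℝ)| < en m := by
    by_cases h0 : en 0 < |(q : ℝ)|
    · exact Or.inl h0
    · right
      have h0' : |(q : ℝ)| < en 0 := lt_of_le_of_ne (not_lt.1 h0) (hirr 0)
      have hex : ∃ M, en M < |(q : ℝ)| := by
        have := en_tendsto.eventually_lt_const habs
        exact this.exists
      classical
      let M := Nat.find hex
      have hM : en M < |(q : ℝ)| := Nat.find_spec hex
      have hMpos : M ≠ 0 := by
        intro h; rw [h] at hM; linarith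
      refine ⟨M - 1, ?_, ?_⟩
      · have : M - 1 + 1 = M := by omega
        rw [this]; exact hM
      · have hlt := Nat.find_min hex (m := M - 1) (by omega)
        exact lt_of_le_of_ne (not_lt.1 hlt) (hirr (M - 1))
  rcases lt_or_gt_of_ne (fun h : (q:ℝ) = 0 => by simp [h] at habs) with hneg | hpos
  · rw [abs_of_neg hneg] at hband hirr
    rcases hband with h | ⟨m, h1, h2⟩
    · exact ⟨0, by rw [II_zero, mem_Iio, ← en_zero]; linarith⟩
    · exact ⟨2 * m + 2, by rw [II_even, mem_Ioo]; constructor <;> linarith⟩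
  · rw [abs_of_pos hpos] at hband hirr
    rcases hband with h | ⟨m, h1, h2⟩
    · exact ⟨1, by rw [II_one, mem_Ioi, ← en_zero]; linarith⟩
    · exact ⟨2 * m + 3, by rw [II_odd, mem_Ioo]; exact ⟨h1, h2⟩⟩

/-! ### The pieces inside `ℚ` -/

/-- The clopen pieces of `ℚ \ {0}`. -/
def W (n : ℕ) : Set ℚ := ((↑) : ℚ → ℝ) ⁻¹' II n

lemma W_ordConnected (n : ℕ) : (W n).OrdConnected := by
  constructor
  intro a ha b hb c hc
  exact (II_ordConnected n).out ha hb ⟨Rat.cast_le.2 hc.1, Rat.cast_le.2 hc.2⟩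

lemma W_isOpen (n : ℕ) : IsOpen (W n) := (II_isOpen n).preimage Rat.continuous_coe_real

lemma W_isClosed (n : ℕ) : IsClosed (W n) := by
  rcases II_shape n with ⟨a, ha, h⟩ | ⟨a, ha, h⟩ | ⟨a, b, ha, hb, hab, h⟩
  · have : W n = ((↑) : ℚ → ℝ) ⁻¹' Iic a := by
      ext q
      simp only [W, h, mem_preimage, mem_Iio, mem_Iic]
      exact ⟨le_of_lt, fun h' => h'.lt_of_ne fun he => (ha.ne_rat q) he.symm⟩
    rw [this]; exact isClosed_Iic.preimage Rat.continuous_coe_real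
  · have : W n = ((↑) : ℚ → ℝ) ⁻¹' Ici a := by
      ext q
      simp only [W, h, mem_preimage, mem_Ioi, mem_Ici]
      exact ⟨le_of_lt, fun h' => lt_of_le_of_ne h' (ha.ne_rat q)⟩
    rw [this]; exact isClosed_Ici.preimage Rat.continuous_coe_real
  · have : W n = ((↑) : ℚ → ℝ) ⁻¹' Icc a b := by
      ext q
      simp only [W, h, mem_preimage, mem_Ioo, mem_Icc]
      constructor
      · rintro ⟨h1, h2⟩; exact ⟨h1.le, h2.le⟩
      · rintro ⟨h1, h2⟩
        exact ⟨lt_of_le_of_ne h1 (ha.ne_rat q), h2.lt_of_ne fun he => (hb.ne_rat q) he.symm⟩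
    rw [this]; exact isClosed_Icc.preimage Rat.continuous_coe_real

lemma W_nonempty (n : ℕ) : (W n).Nonempty := by
  rcases II_shape n with ⟨a, _, h⟩ | ⟨a, _, h⟩ | ⟨a, b, _, _, hab, h⟩
  · obtain ⟨q, hq⟩ := exists_rat_lt a
    exact ⟨q, by simp [W, h, mem_Iio, hq]⟩
  · obtain ⟨q, hq⟩ := exists_rat_gt a
    exact ⟨q, by simp [W, h, mem_Ioi, hq]⟩
  · obtain ⟨q, hq1, hq2⟩ := exists_rat_btwn hab
    exact ⟨q, by simp [W, h, mem_Ioo]; exact ⟨hq1, hq2⟩⟩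

lemma W_noMin (n : ℕ) : NoMinOrder ↥(W n) := by
  constructor
  rintro ⟨q, hq⟩
  rcases II_shape n with ⟨a, _, h⟩ | ⟨a, _, h⟩ | ⟨a, b, _, _, hab, h⟩
  · refine ⟨⟨q - 1, ?_⟩, ?_⟩
    · rw [W, mem_preimage, h, mem_Iio] at hq ⊢
      push_cast; linarith
    · exact Subtype.mk_lt_mk.2 (by linarith)
  · rw [W, mem_preimage, h, mem_Ioi] at hq
    obtain ⟨r, hr1, hr2⟩ := exists_rat_btwn hq
    refine ⟨⟨r, ?_⟩, ?_⟩
    · rw [W, mem_preimage, h, mem_Ioi]; exact hr1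
    · exact Subtype.mk_lt_mk.2 (by exact_mod_cast hr2)
  · rw [W, mem_preimage, h, mem_Ioo] at hq
    obtain ⟨r, hr1, hr2⟩ := exists_rat_btwn hq.1
    refine ⟨⟨r, ?_⟩, ?_⟩
    · rw [W, mem_preimage, h, mem_Ioo]; exact ⟨hr1, hr2.trans hq.2⟩
    · exact Subtype.mk_lt_mk.2 (by exact_mod_cast hr2)

lemma W_noMax (n : ℕ) : NoMaxOrder ↥(W n) := by
  constructor
  rintro ⟨q, hq⟩
  rcases II_shape n with ⟨a, _, h⟩ | ⟨a, _, h⟩ | ⟨a, b, _, _, hab, h⟩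
  · rw [W, mem_preimage, h, mem_Iio] at hq
    obtain ⟨r, hr1, hr2⟩ := exists_rat_btwn hq
    refine ⟨⟨r, ?_⟩, ?_⟩
    · rw [W, mem_preimage, h, mem_Iio]; exact hr2
    · exact Subtype.mk_lt_mk.2 (by exact_mod_cast hr1)
  · refine ⟨⟨q + 1, ?_⟩, ?_⟩
    · rw [W, mem_preimage, h, mem_Ioi] at hq ⊢
      push_cast; linarith
    · exact Subtype.mk_lt_mk.2 (by linarith)
  · rw [W, mem_preimage, h, mem_Ioo] at hq
    obtain ⟨r, hr1, hr2⟩ := exists_rat_btwn hq.2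
    refine ⟨⟨r, ?_⟩, ?_⟩
    · rw [W, mem_preimage, h, mem_Ioo]; exact ⟨hq.1.trans hr1, hr2⟩
    · exact Subtype.mk_lt_mk.2 (by exact_mod_cast hr1)

/-- The homeomorphism between `ℚ` and each piece. -/
def homeoQ (n : ℕ) : ℚ ≃ₜ ↥(W n) := by
  haveI := W_ordConnected n
  haveI := W_noMin n
  haveI := W_noMax n
  haveI : Nonempty ↥(W n) := (W_nonempty n).to_subtype
  exact (Classical.choice (Order.iso_of_countable_dense ℚ ↥(W n))).toHomeomorph

lemma mem_W_of_homeoQ (n : ℕ) (x : ℚ) : ((homeoQ n x : ℚ) : ℝ) ∈ II n := (homeoQ n x).2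

lemma ne_zero_of_mem_W {n : ℕ} {q : ℚ} (hq : q ∈ W n) : q ≠ 0 := by
  rintro rfl
  exact zero_not_mem_II n (by simpa [W] using hq)


lemma abs_lt_of_mem_W {n M : ℕ} {q : ℚ} (hq : q ∈ W n) (hn : 2 * M + 2 ≤ n) :
    |(q : ℝ)| < en M := by
  rcases II_cases n with rfl | rfl | ⟨m, rfl⟩ | ⟨m, rfl⟩
  · omega
  · omega
  · have habs := mem_II_abs (Or.inl rfl) (show ((q : ℝ)) ∈ II (2 * m + 2) from hq)
    exact habs.2.trans_le (en_anti (by omega))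
  · have habs := mem_II_abs (Or.inr rfl) (show ((q : ℝ)) ∈ II (2 * m + 3) from hq)
    exact habs.2.trans_le (en_anti (by omega))

lemma index_ge {n N : ℕ} {q : ℚ} (hq : q ∈ W n) (h : |(q : ℝ)| < en N) : N ≤ n := by
  rcases II_cases n with rfl | rfl | ⟨m, rfl⟩ | ⟨m, rfl⟩
  · have h1 := mem_II_abs_le_one (by norm_num) (show ((q : ℝ)) ∈ II 0 from hq)
    have h2 := en_anti (Nat.zero_le N)
    linarith
  · have h1 := mem_II_abs_le_one (by norm_num) (show ((q : ℝ)) ∈ II 1 from hq)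
    have h2 := en_anti (Nat.zero_le N)
    linarith
  · have h1 := mem_II_abs (Or.inl rfl) (show ((q : ℝ)) ∈ II (2 * m + 2) from hq)
    have h3 : N < m + 1 := by
      by_contra hcon
      have := en_anti (not_lt.mp hcon)
      linarith [h1.1]
    omega
  · have h1 := mem_II_abs (Or.inr rfl) (show ((q : ℝ)) ∈ II (2 * m + 3) from hq)
    have h3 : N < m + 1 := by
      by_contra hcon
      have := en_anti (not_lt.mp hcon)
      linarith [h1.1]
    omega


section Maps

variable {k : Type*} [NontriviallyNormedField k] [IsUltrametricDist k]

lemma norm_sub_le_max' (a b : k) : ‖a - b‖ ≤ max ‖a‖ ‖b‖ := by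
  have := IsUltrametricDist.norm_add_le_max a (-b)
  simpa [sub_eq_add_neg] using this

lemma norm_add_le_max' (a b : k) : ‖a + b‖ ≤ max ‖a‖ ‖b‖ :=
  IsUltrametricDist.norm_add_le_max a b

/-- The inclusion `ℚ ≃ₜ W n ⊆ ℚ` as a continuous map. -/
def inclW (n : ℕ) : C(ℚ, ℚ) :=
  ⟨fun x => ((homeoQ n) x : ℚ), continuous_subtype_val.comp (homeoQ n).continuous⟩

/-- The `n`-th piece of a bounded continuous function. -/
def piece (f : ℚ →ᵇ k) (n : ℕ) : ℚ →ᵇ k :=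
  f.compContinuous (inclW n) - BoundedContinuousFunction.const ℚ (f 0)

lemma piece_apply (f : ℚ →ᵇ k) (n : ℕ) (x : ℚ) :
    piece f n x = f ((homeoQ n) x : ℚ) - f 0 := rfl

lemma norm_piece_le (f : ℚ →ᵇ k) (n : ℕ) {C : ℝ} (hC : 0 ≤ C)
    (h : ∀ q ∈ W n, ‖f q - f 0‖ ≤ C) : ‖piece f n‖ ≤ C := by
  rw [norm_le hC]
  intro x
  rw [piece_apply]
  exact h _ ((homeoQ n) x).2

lemma norm_piece_le_norm (f : ℚ →ᵇ k) (n : ℕ) : ‖piece f n‖ ≤ ‖f‖ := by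
  refine norm_piece_le f n (norm_nonneg f) fun q _ => ?_
  exact (norm_sub_le_max' _ _).trans
    (max_le (f.norm_coe_le_norm q) (f.norm_coe_le_norm 0))

lemma piece_tendsto (f : ℚ →ᵇ k) :
    Tendsto (fun n => piece f n) atTop (nhds (0 : ℚ →ᵇ k)) := by
  rw [NormedAddCommGroup.tendsto_nhds_zero]
  intro ε hε
  obtain ⟨δ, hδ, hfδ⟩ := Metric.continuousAt_iff.mp (f.continuous.continuousAt (x := 0))
    (ε / 2) (by linarith)
  obtain ⟨M, hM⟩ := (en_tendsto.eventually_lt_const hδ).exists_forall_of_atTop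
  rw [eventually_atTop]
  refine ⟨2 * M + 2, fun n hn => ?_⟩
  have key : ∀ q ∈ W n, ‖f q - f 0‖ ≤ ε / 2 := by
    intro q hq
    have hlt : |(q : ℝ)| < δ := (abs_lt_of_mem_W hq hn).trans (hM M le_rfl)
    have hdist : dist q 0 < δ := by
      rw [Rat.dist_eq]; simpa using hlt
    have := hfδ hdist
    rw [dist_eq_norm] at this
    exact this.le
  calc ‖piece f n‖ ≤ ε / 2 := norm_piece_le f n (by linarith) key
    _ < ε := by linarith

/-- The sequence of pieces, as an element of `C₀`. -/
def pieces (f : ℚ →ᵇ k) : C₀(ℕ, ℚ →ᵇ k) :=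
  ⟨⟨fun n => piece f n, continuous_of_discreteTopology⟩, by
    rw [cocompact_eq_atTop]; exact piece_tendsto f⟩

lemma pieces_apply (f : ℚ →ᵇ k) (n : ℕ) : pieces f n = piece f n := rfl

lemma norm_pieces_le (f : ℚ →ᵇ k) {C : ℝ} (hC : 0 ≤ C) (h : ∀ n, ‖piece f n‖ ≤ C) :
    ‖pieces f‖ ≤ C := by
  rw [← ZeroAtInftyContinuousMap.norm_toBCF_eq_norm, norm_le hC]
  exact h

lemma norm_piece_le_norm_pieces (f : ℚ →ᵇ k) (n : ℕ) : ‖piece f n‖ ≤ ‖pieces f‖ := by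
  rw [← ZeroAtInftyContinuousMap.norm_toBCF_eq_norm]
  exact (pieces f).toBCF.norm_coe_le_norm n

/-- The splitting map, as a linear map. -/
def Φ : (ℚ →ᵇ k) →ₗ[k] k × C₀(ℕ, ℚ →ᵇ k) where
  toFun f := (f 0, pieces f)
  map_add' f g := by
    refine Prod.ext rfl ?_
    ext n x
    show piece (f + g) n x = piece f n x + piece g n x
    simp only [piece_apply]
    simp only [BoundedContinuousFunction.add_apply]
    ring
  map_smul' c f := by
    refine Prod.ext rfl ?_
    ext n x
    show piece (c • f) n x = c • piece f n x
    simp only [piece_apply]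
    simp only [BoundedContinuousFunction.smul_apply]
    rw [smul_sub]

lemma Φ_norm (f : ℚ →ᵇ k) : ‖Φ f‖ = ‖f‖ := by
  have hd : ‖Φ f‖ = max ‖f 0‖ ‖pieces f‖ := Prod.norm_def _
  apply le_antisymm
  · rw [hd]
    exact max_le (f.norm_coe_le_norm 0) (norm_pieces_le f (norm_nonneg f)
      fun n => norm_piece_le_norm f n)
  · rw [hd, norm_le (le_max_of_le_left (norm_nonneg _))]
    intro q
    by_cases hq : q = 0
    · subst hq
      exact le_max_left _ _
    · obtain ⟨n, hn⟩ := exists_mem_II hq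
      have hqW : q ∈ W n := hn
      set x := (homeoQ n).symm ⟨q, hqW⟩ with hx
      have hval : ((homeoQ n) x : ℚ) = q := by
        rw [hx, (homeoQ n).apply_symm_apply]
      have hfq : f q = piece f n x + f 0 := by
        rw [piece_apply, hval]; ring
      rw [hfq]
      refine (norm_add_le_max' _ _).trans (max_le ?_ ?_)
      · exact le_trans (((piece f n).norm_coe_le_norm x).trans
          (norm_piece_le_norm_pieces f n)) (le_max_right _ _)
      · exact le_max_left _ _

/-- The inverse: gluing a constant and a sequence of pieces. -/
def glue (c : k) (G : C₀(ℕ, ℚ →ᵇ k)) (q : ℚ) : k :=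
  if hq : q = 0 then c
  else c + G (exists_mem_II hq).choose
    ((homeoQ (exists_mem_II hq).choose).symm ⟨q, (exists_mem_II hq).choose_spec⟩)

lemma glue_eq {c : k} {G : C₀(ℕ, ℚ →ᵇ k)} {q : ℚ} {n : ℕ} (hn : q ∈ W n) :
    glue c G q = c + G n ((homeoQ n).symm ⟨q, hn⟩) := by
  have hq : q ≠ 0 := ne_zero_of_mem_W hn
  rw [glue, dif_neg hq]
  have hmn : (exists_mem_II hq).choose = n := by
    by_contra h
    exact II_disjoint h (exists_mem_II hq).choose_spec hn
  have key : ∀ (m : ℕ) (hm : q ∈ W m), m = n →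
      c + G m ((homeoQ m).symm ⟨q, hm⟩) = c + G n ((homeoQ n).symm ⟨q, hn⟩) := by
    rintro m hm rfl; rfl
  exact key _ _ hmn

lemma glue_zero (c : k) (G : C₀(ℕ, ℚ →ᵇ k)) : glue c G 0 = c := by
  rw [glue, dif_pos rfl]

lemma glue_continuous (c : k) (G : C₀(ℕ, ℚ →ᵇ k)) : Continuous (glue c G) := by
  rw [continuous_iff_continuousAt]
  intro q
  by_cases hq : q = 0
  · subst hq
    rw [Metric.continuousAt_iff]
    intro ε hε
    have hinf : Tendsto (fun n => G n) atTop (nhds (0 : ℚ →ᵇ k)) := by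
      rw [← cocompact_eq_atTop (α := ℕ)]
      exact G.zero_at_infty'
    rw [NormedAddCommGroup.tendsto_nhds_zero] at hinf
    obtain ⟨N, hN⟩ := (hinf ε hε).exists_forall_of_atTop
    refine ⟨en N, en_pos N, ?_⟩
    intro q' hq'
    by_cases hq0 : q' = 0
    · subst hq0; simpa [glue_zero] using hε
    · obtain ⟨n, hn⟩ := exists_mem_II hq0
      have hnW : q' ∈ W n := hn
      rw [glue_eq hnW, glue_zero]
      have hdist : dist (c + G n ((homeoQ n).symm ⟨q', hnW⟩)) c
          = ‖G n ((homeoQ n).symm ⟨q', hnW⟩)‖ := by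
        rw [dist_eq_norm]; ring_nf
      rw [hdist]
      have habs : |(q' : ℝ)| < en N := by
        rw [Rat.dist_eq] at hq'; simpa using hq'
      have hnN : N ≤ n := index_ge hnW habs
      calc ‖G n ((homeoQ n).symm ⟨q', hnW⟩)‖ ≤ ‖G n‖ :=
            (G n).norm_coe_le_norm _
        _ < ε := hN n hnN
  · obtain ⟨n, hn⟩ := exists_mem_II hq
    have hqW : q ∈ W n := hn
    have hopen : W n ∈ nhds q := (W_isOpen n).mem_nhds hqW
    refine ContinuousOn.continuousAt ?_ hopen
    rw [continuousOn_iff_continuous_restrict]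
    have heq : (W n).domRestrict (glue c G)
        = fun y : W n => c + G n ((homeoQ n).symm y) := by
      funext y
      exact glue_eq y.2
    rw [heq]
    exact continuous_const.add ((G n).continuous.comp (homeoQ n).symm.continuous)

lemma norm_G_le (G : C₀(ℕ, ℚ →ᵇ k)) (n : ℕ) : ‖G n‖ ≤ ‖G‖ := by
  rw [← ZeroAtInftyContinuousMap.norm_toBCF_eq_norm]
  exact G.toBCF.norm_coe_le_norm n

/-- The glued function as a bounded continuous function. -/
def glueB (c : k) (G : C₀(ℕ, ℚ →ᵇ k)) : ℚ →ᵇ k :=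
  BoundedContinuousFunction.ofNormedAddCommGroup (glue c G) (glue_continuous c G)
    (‖c‖ + ‖G‖) (by
      intro q
      by_cases hq : q = 0
      · subst hq; rw [glue_zero]
        have : (0:ℝ) ≤ ‖G‖ := norm_nonneg G
        linarith
      · obtain ⟨n, hn⟩ := exists_mem_II hq
        have hqW : q ∈ W n := hn
        rw [glue_eq hqW]
        refine (norm_add_le _ _).trans (add_le_add le_rfl ?_)
        exact ((G n).norm_coe_le_norm _).trans (norm_G_le G n))

lemma glueB_apply (c : k) (G : C₀(ℕ, ℚ →ᵇ k)) (q : ℚ) : glueB c G q = glue c G q := rfl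

lemma Φ_surjective : Function.Surjective (Φ (k := k)) := by
  rintro ⟨c, G⟩
  refine ⟨glueB c G, Prod.ext ?_ ?_⟩
  · show glueB c G 0 = c
    rw [glueB_apply, glue_zero]
  · show pieces (glueB c G) = G
    ext n x
    show piece (glueB c G) n x = G n x
    rw [piece_apply, glueB_apply, glueB_apply, glue_zero]
    have hmem : ((homeoQ n) x : ℚ) ∈ W n := ((homeoQ n) x).2
    rw [glue_eq hmem]
    have : (⟨((homeoQ n) x : ℚ), hmem⟩ : W n) = (homeoQ n) x := rfl
    rw [this, (homeoQ n).symm_apply_apply]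
    ring

end Maps

end CbdRatSplit

end CbdRatSplitAux

/-- Over a complete nonarchimedean valued field `k`, the Banach space `C_bd(ℚ, k)` of
bounded continuous functions `ℚ → k` is isometrically isomorphic to
`k × C₀(ℕ, ℚ →ᵇ k)` with the maximum norm on the product. -/
theorem cbd_rat_c0_split
    {k : Type*} [NontriviallyNormedField k] [IsUltrametricDist k] [CompleteSpace k] :
    Nonempty ((ℚ →ᵇ k) ≃ₗᵢ[k] (k × C₀(ℕ, ℚ →ᵇ k))) :=
  ⟨LinearIsometryEquiv.ofSurjective ⟨CbdRatSplit.Φ, CbdRatSplit.Φ_norm⟩ CbdRatSplit.Φ_surjective⟩
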